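/- arXiv:1305.5545 — 4 statements merged into one kernel-verified Lean document; each statement's English description precedes it below -/
import Mathlib

section
/- If g is a strict vector k-coloring of G and h is a strict vector k-coloring of H, then the map (u,v) ↦ g(u) ⊗ h(v) (tensor product of vectors) is a strict vector k-coloring of the Cartesian product G □ H. -/
/-- If `g` and `h` are strict vector `k`-colorings of `G` and `H`, then
`(u,v) ↦ g u ⊗ h v` is a strict vector `k`-coloring of `G □ H`. -/
theorem stmt8 {U W : Type*} (G : SimpleGraph U) (H : SimpleGraph W) (k : ℝ)
    {d₁ d₂ : ℕ} (g : U → EuclideanSpace ℝ (Fin d₁)) (h : W → EuclideanSpace ℝ (Fin d₂))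
    (hgu : ∀ u, ‖g u‖ = 1) (hhu : ∀ v, ‖h v‖ = 1)
    (hg : ∀ u u', G.Adj u u' → (inner ℝ (g u) (g u') : ℝ) = -(1 / (k - 1)))
    (hh : ∀ v v', H.Adj v v' → (inner ℝ (h v) (h v') : ℝ) = -(1 / (k - 1)))
    (φ : U × W → EuclideanSpace ℝ (Fin d₁ × Fin d₂))
    (hφ : ∀ a p, φ a p = g a.1 p.1 * h a.2 p.2) :
    (∀ a, ‖φ a‖ = 1) ∧
    ∀ a b, (G.boxProd H).Adj a b → (inner ℝ (φ a) (φ b) : ℝ) = -(1 / (k - 1)) := by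
  have key : ∀ a b : U × W, (inner ℝ (φ a) (φ b) : ℝ)
      = (inner ℝ (g a.1) (g b.1) : ℝ) * (inner ℝ (h a.2) (h b.2) : ℝ) := by
    intro a b
    simp only [PiLp.inner_apply, RCLike.inner_apply, conj_trivial, hφ]
    rw [Fintype.sum_prod_type, Finset.sum_mul_sum]
    congr 1; ext i; congr 1; ext j; ring
  have hself : ∀ a : U × W, (inner ℝ (φ a) (φ a) : ℝ) = 1 := by
    intro a
    rw [key, real_inner_self_eq_norm_sq, real_inner_self_eq_norm_sq, hgu, hhu]
    norm_num
  constructor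
  · intro a
    have := hself a
    rw [real_inner_self_eq_norm_sq] at this
    nlinarith [norm_nonneg (φ a)]
  · intro a b hab
    rcases hab with ⟨hG, heq⟩ | ⟨hH, heq⟩
    · rw [key, heq, hg _ _ hG, real_inner_self_eq_norm_sq, hhu]; ring
    · rw [key, heq, hh _ _ hH, real_inner_self_eq_norm_sq, hgu]; ring
end

section
/- (Sabidussi for strict vector chromatic number) For any nonempty simple graphs G and H, the strict vector chromatic number of the Cartesian product G □ H equals the maximum of the strict vector chromatic numbers of G and H. -/
/-- The strict vector chromatic number: the infimum of real `k > 1` such that the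
vertices can be assigned unit vectors with inner product exactly `-1/(k-1)` on edges.
It equals the Lovász theta function of the complement. -/
noncomputable def sVCN {V : Type*} (G : SimpleGraph V) : ℝ :=
  sInf {k : ℝ | 1 < k ∧ ∃ (d : ℕ) (φ : V → EuclideanSpace ℝ (Fin d)),
    (∀ v, ‖φ v‖ = 1) ∧ ∀ u v, G.Adj u v → (inner ℝ (φ u) (φ v) : ℝ) = -(1 / (k - 1))}

/-- The feasible set defining the strict vector chromatic number. -/
def Sset {V : Type*} (G : SimpleGraph V) : Set ℝ :=
  {k : ℝ | 1 < k ∧ ∃ (d : ℕ) (φ : V → EuclideanSpace ℝ (Fin d)),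
    (∀ v, ‖φ v‖ = 1) ∧ ∀ u v, G.Adj u v → (inner ℝ (φ u) (φ v) : ℝ) = -(1 / (k - 1))}

lemma norm_one_of_inner_self {ι : Type*} [Fintype ι] (x : EuclideanSpace ℝ ι)
    (h : (inner ℝ x x : ℝ) = 1) : ‖x‖ = 1 := by
  have h2 := real_inner_self_eq_norm_sq x
  nlinarith [norm_nonneg x]

lemma inner_eq_sum {ι : Type*} [Fintype ι] (x y : EuclideanSpace ℝ ι) :
    (inner ℝ x y : ℝ) = ∑ i, x i * y i := by
  simp [PiLp.inner_apply, RCLike.inner_apply, mul_comm]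

/-- Membership in `Sset` can be certified by vectors indexed by any finite type. -/
lemma mem_Sset_of_fam {V : Type*} (G : SimpleGraph V) {k : ℝ} (hk : 1 < k)
    {ι : Type*} [Fintype ι] (φ : V → EuclideanSpace ℝ ι)
    (h1 : ∀ v, ‖φ v‖ = 1)
    (h2 : ∀ u v, G.Adj u v → (inner ℝ (φ u) (φ v) : ℝ) = -(1 / (k - 1))) :
    k ∈ Sset G := by
  let L := LinearIsometryEquiv.piLpCongrLeft 2 ℝ ℝ (Fintype.equivFin ι)
  exact ⟨hk, Fintype.card ι, fun v => L (φ v),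
    fun v => by rw [L.norm_map]; exact h1 v,
    fun u v h => by rw [LinearIsometryEquiv.inner_map_map]; exact h2 u v h⟩

lemma sum_ite_mul_ite {n : ℕ} (x y : Fin n) (a b : ℝ) :
    ∑ i, (if i = x then a else b) * (if i = y then a else b)
      = n * b^2 + 2*b*(a-b) + (if x = y then (a-b)^2 else 0) := by
  have key : ∀ i : Fin n, (if i = x then a else b) * (if i = y then a else b)
      = b*b + (if i = x then b*(a-b) else 0) + (if i = y then b*(a-b) else 0)
        + (if i = x then (if i = y then (a-b)^2 else 0) else 0) := by
    intro i
    rcases eq_or_ne i x with hx | hx <;> rcases eq_or_ne i y with hy | hy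
    · subst hx; subst hy; simp; ring
    · subst hx; simp [hy]; ring
    · subst hy; simp [hx, (Ne.symm hx)]; ring
    · simp [hx, hy]
  rw [Finset.sum_congr rfl (fun i _ => key i)]
  rw [Finset.sum_add_distrib, Finset.sum_add_distrib, Finset.sum_add_distrib]
  rw [Finset.sum_const, Finset.sum_ite_eq', Finset.sum_ite_eq', Finset.sum_ite_eq']
  by_cases hxy : x = y <;> simp [hxy, Finset.card_univ] <;> ring

/-- The simplex construction: `Sset G` is nonempty for a finite nonempty graph. -/
lemma Sset_nonempty {V : Type*} [Fintype V] [Nonempty V] (G : SimpleGraph V) :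
    (Sset G).Nonempty := by
  set n := Fintype.card V with hn
  have hn1 : 1 ≤ n := Fintype.card_pos
  set N : ℕ := n + 1 with hN
  set r : ℝ := (N : ℝ) with hr
  have hr2 : (2 : ℝ) ≤ r := by
    have : (1:ℝ) ≤ (n:ℝ) := by exact_mod_cast hn1
    rw [hr, hN]; push_cast; linarith
  have hr1 : (1:ℝ) < r := by linarith
  have hr0 : r ≠ 0 := by linarith
  have hrm1 : r - 1 ≠ 0 := by linarith
  set c : ℝ := Real.sqrt (r / (r-1)) with hc
  have hc2 : c^2 = r/(r-1) := Real.sq_sqrt (div_nonneg (by linarith) (by linarith))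
  have hc2' : c^2*(r-1) = r := by rw [hc2]; field_simp
  set a : ℝ := c*(r-1)/r with ha
  set b : ℝ := -c/r with hb
  have hab : a - b = c := by rw [ha, hb]; field_simp; ring
  set ι : V → Fin N := fun v => Fin.castSucc (Fintype.equivFin V v) with hι
  have hinj : Function.Injective ι := by
    intro u v h
    exact (Fintype.equivFin V).injective (Fin.castSucc_injective _ h)
  set φ : V → EuclideanSpace ℝ (Fin N) := fun v => WithLp.toLp 2 (fun i => if i = ι v then a else b) with hφ
  refine ⟨r, mem_Sset_of_fam G hr1 φ ?_ ?_⟩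
  · intro v
    apply norm_one_of_inner_self
    rw [inner_eq_sum]
    have hs : ∑ i, φ v i * φ v i = (N:ℝ) * b^2 + 2*b*(a-b) + (a-b)^2 := by
      rw [hφ]; simp only [PiLp.toLp_apply]
      rw [sum_ite_mul_ite]; simp
    rw [hs, hab, ← hr]
    have e1 : r*b^2 + 2*b*c + c^2 = (c^2*(r-1))/r := by rw [hb]; field_simp; ring
    rw [e1, hc2']
    field_simp
  · intro u v huv
    rw [inner_eq_sum]
    have hne : ι u ≠ ι v := fun h => (G.ne_of_adj huv) (hinj h)
    have hs : ∑ i, φ u i * φ v i = (N:ℝ) * b^2 + 2*b*(a-b) := by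
      rw [hφ]; simp only [PiLp.toLp_apply]
      rw [sum_ite_mul_ite]; simp [hne]
    rw [hs, hab, ← hr]
    have e2 : r*b^2 + 2*b*c = -(c^2)/r := by rw [hb]; field_simp; ring
    rw [e2, hc2]
    field_simp

/-- `Sset G` is upward closed. -/
lemma Sset_upward {V : Type*} [Fintype V] (G : SimpleGraph V) {k k' : ℝ}
    (hk : k ∈ Sset G) (hkk' : k ≤ k') : k' ∈ Sset G := by
  classical
  obtain ⟨hk1, d, φ, h1, h2⟩ := hk
  have hk'1 : 1 < k' := lt_of_lt_of_le hk1 hkk'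
  set t : ℝ := (k-1)/(k'-1) with htdef
  have ht0 : 0 < t := div_pos (by linarith) (by linarith)
  have ht1 : t ≤ 1 := by
    rw [htdef, div_le_one (by linarith)]; linarith
  set s : ℝ := Real.sqrt (1-t) with hsdef
  have hs2 : s * s = 1 - t := Real.mul_self_sqrt (by linarith)
  set ψ : V → EuclideanSpace ℝ (Fin d ⊕ V) := fun v =>
    WithLp.toLp 2 (Sum.elim (fun j => Real.sqrt t * φ v j) (fun w => if w = v then s else 0)) with hψ
  have key : ∀ x y, (inner ℝ (ψ x) (ψ y) : ℝ)
      = t * (inner ℝ (φ x) (φ y) : ℝ) + (if x = y then (1-t) else 0) := by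
    intro x y
    rw [inner_eq_sum, inner_eq_sum, Fintype.sum_sum_type]
    have e1 : ∀ j : Fin d, ψ x (Sum.inl j) * ψ y (Sum.inl j) = t * (φ x j * φ y j) := by
      intro j
      simp only [hψ, PiLp.toLp_apply, Sum.elim_inl]
      rw [mul_mul_mul_comm, Real.mul_self_sqrt ht0.le]
    have e2 : ∀ w : V, ψ x (Sum.inr w) * ψ y (Sum.inr w)
        = if w = x then (if w = y then s*s else 0) else 0 := by
      intro w
      simp only [hψ, PiLp.toLp_apply, Sum.elim_inr]
      by_cases hx : w = x <;> by_cases hy : w = y <;> simp [hx, hy]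
    rw [Finset.sum_congr rfl (fun j _ => e1 j), Finset.sum_congr rfl (fun w _ => e2 w)]
    rw [← Finset.mul_sum, Finset.sum_ite_eq']
    simp only [Finset.mem_univ, if_true]
    by_cases hxy : x = y <;> simp [hxy, hs2]
  refine mem_Sset_of_fam G hk'1 ψ ?_ ?_
  · intro v
    apply norm_one_of_inner_self
    rw [key v v]
    have : (inner ℝ (φ v) (φ v) : ℝ) = 1 := by
      rw [real_inner_self_eq_norm_sq, h1 v]; norm_num
    rw [this]; simp
  · intro u v huv
    rw [key u v, h2 u v huv]
    simp only [G.ne_of_adj huv, if_false]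
    rw [htdef]
    field_simp
    rw [add_zero, div_mul_cancel_left₀ (by linarith : k - 1 ≠ 0)]
    ring

/-- Restriction to a `G`-fiber. -/
lemma Sset_boxProd_left {U W : Type*} [Nonempty W] (G : SimpleGraph U) (H : SimpleGraph W)
    {k : ℝ} (h : k ∈ Sset (G.boxProd H)) : k ∈ Sset G := by
  obtain ⟨hk1, d, φ, h1, h2⟩ := h
  obtain ⟨w0⟩ := ‹Nonempty W›
  exact ⟨hk1, d, fun u => φ (u, w0), fun u => h1 _,
    fun u u' ha => h2 (u, w0) (u', w0) (SimpleGraph.boxProd_adj.mpr (Or.inl ⟨ha, rfl⟩))⟩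

/-- Restriction to an `H`-fiber. -/
lemma Sset_boxProd_right {U W : Type*} [Nonempty U] (G : SimpleGraph U) (H : SimpleGraph W)
    {k : ℝ} (h : k ∈ Sset (G.boxProd H)) : k ∈ Sset H := by
  obtain ⟨hk1, d, φ, h1, h2⟩ := h
  obtain ⟨u0⟩ := ‹Nonempty U›
  exact ⟨hk1, d, fun w => φ (u0, w), fun w => h1 _,
    fun w w' ha => h2 (u0, w) (u0, w') (SimpleGraph.boxProd_adj.mpr (Or.inr ⟨ha, rfl⟩))⟩

/-- The tensor-product construction for the box product. -/
lemma Sset_boxProd_of {U W : Type*} (G : SimpleGraph U) (H : SimpleGraph W)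
    {k : ℝ} (hG : k ∈ Sset G) (hH : k ∈ Sset H) : k ∈ Sset (G.boxProd H) := by
  obtain ⟨hk1, d1, φ, hφ1, hφ2⟩ := hG
  obtain ⟨-, d2, χ, hχ1, hχ2⟩ := hH
  set ψ : U × W → EuclideanSpace ℝ (Fin d1 × Fin d2) :=
    fun p => WithLp.toLp 2 (fun i : Fin d1 × Fin d2 => φ p.1 i.1 * χ p.2 i.2) with hψ
  have key : ∀ p q : U × W, (inner ℝ (ψ p) (ψ q) : ℝ)
      = (inner ℝ (φ p.1) (φ q.1) : ℝ) * (inner ℝ (χ p.2) (χ q.2) : ℝ) := by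
    intro p q
    rw [inner_eq_sum, inner_eq_sum, inner_eq_sum, Fintype.sum_prod_type,
      Finset.sum_mul_sum]
    exact Finset.sum_congr rfl fun i _ => Finset.sum_congr rfl fun j _ => by
      simp only [hψ, PiLp.toLp_apply]; ring
  have hself : ∀ (x : U) (y : W), (inner ℝ (φ x) (φ x) : ℝ) = 1 ∧ (inner ℝ (χ y) (χ y) : ℝ) = 1 := by
    intro x y
    constructor
    · rw [real_inner_self_eq_norm_sq, hφ1 x]; norm_num
    · rw [real_inner_self_eq_norm_sq, hχ1 y]; norm_num
  refine mem_Sset_of_fam (G.boxProd H) hk1 ψ ?_ ?_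
  · intro v
    apply norm_one_of_inner_self
    rw [key v v, (hself v.1 v.2).1, (hself v.1 v.2).2, mul_one]
  · intro p q hpq
    rw [key p q]
    rcases SimpleGraph.boxProd_adj.mp hpq with ⟨hadj, heq⟩ | ⟨hadj, heq⟩
    · rw [hφ2 _ _ hadj, heq, (hself p.1 q.2).2, mul_one]
    · rw [hχ2 _ _ hadj, heq, (hself q.1 p.2).1, one_mul]

lemma sVCN_eq_sInf {V : Type*} (G : SimpleGraph V) : sVCN G = sInf (Sset G) := rfl

/-- Sabidussi's theorem for the strict vector chromatic number. -/
theorem stmt9 {U W : Type*} [Fintype U] [Fintype W] [Nonempty U] [Nonempty W]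
    (G : SimpleGraph U) (H : SimpleGraph W) :
    sVCN (G.boxProd H) = max (sVCN G) (sVCN H) := by
  rw [sVCN_eq_sInf, sVCN_eq_sInf, sVCN_eq_sInf]
  have hC : Sset (G.boxProd H) = Sset G ∩ Sset H := by
    ext k
    exact ⟨fun h => ⟨Sset_boxProd_left G H h, Sset_boxProd_right G H h⟩,
      fun ⟨h1, h2⟩ => Sset_boxProd_of G H h1 h2⟩
  have bddA : BddBelow (Sset G) := ⟨1, fun x hx => hx.1.le⟩
  have bddB : BddBelow (Sset H) := ⟨1, fun x hx => hx.1.le⟩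
  have bddC : BddBelow (Sset (G.boxProd H)) := ⟨1, fun x hx => hx.1.le⟩
  have hA0 : (Sset G).Nonempty := Sset_nonempty G
  have hB0 : (Sset H).Nonempty := Sset_nonempty H
  have hC0 : (Sset (G.boxProd H)).Nonempty := by
    obtain ⟨x, hx⟩ := hA0
    obtain ⟨y, hy⟩ := hB0
    exact ⟨max x y, hC ▸ ⟨Sset_upward G hx (le_max_left x y),
      Sset_upward H hy (le_max_right x y)⟩⟩
  set m : ℝ := max (sInf (Sset G)) (sInf (Sset H)) with hm
  apply le_antisymm
  · have hsub : Set.Ioi m ⊆ Sset (G.boxProd H) := by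
      intro x hx
      have hxa : sInf (Sset G) < x := lt_of_le_of_lt (le_max_left _ _) hx
      have hxb : sInf (Sset H) < x := lt_of_le_of_lt (le_max_right _ _) hx
      obtain ⟨y, hyA, hyx⟩ := exists_lt_of_csInf_lt hA0 hxa
      obtain ⟨z, hzB, hzx⟩ := exists_lt_of_csInf_lt hB0 hxb
      exact hC ▸ ⟨Sset_upward G hyA hyx.le, Sset_upward H hzB hzx.le⟩
    calc sInf (Sset (G.boxProd H)) ≤ sInf (Set.Ioi m) :=
          csInf_le_csInf bddC Set.nonempty_Ioi hsub
      _ = m := csInf_Ioi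
  · refine le_csInf hC0 fun x hx => ?_
    rw [hC] at hx
    exact max_le (csInf_le bddA hx.1) (csInf_le bddB hx.2)
end

section
/- Let G be a graph with n vertices, e edges, adjacency matrix A, and least adjacency eigenvalue τ < 0. Then the vector chromatic number of G satisfies χ_vec(G) ≥ 1 − (2e/n)/τ. -/
open Matrix Finset SimpleGraph

section Aux
variable {V : Type} [Fintype V] [DecidableEq V]

lemma myDiagNonneg {M : Matrix V V ℝ} (hM : M.PosSemidef) (i : V) : 0 ≤ M i i := by
  have := hM.dotProduct_mulVec_nonneg (Pi.single i 1)
  simpa [dotProduct, mulVec, Pi.single_apply, Finset.sum_ite_eq, Finset.sum_ite_eq'] using this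

lemma myTraceNonneg {M : Matrix V V ℝ} (hM : M.PosSemidef) : 0 ≤ M.trace := by
  exact Finset.sum_nonneg fun i _ => myDiagNonneg hM i

open scoped MatrixOrder in
lemma myTraceMulNonneg {A B : Matrix V V ℝ} (hA : A.PosSemidef) (hB : B.PosSemidef) :
    0 ≤ (A * B).trace := by
  have hS : (CFC.sqrt A).PosSemidef := (CFC.sqrt_nonneg A).posSemidef
  have h1 : A * B = CFC.sqrt A * (CFC.sqrt A * B) := by
    rw [← mul_assoc, CFC.sqrt_mul_sqrt_self A hA.nonneg]
  have h2 : (A * B).trace = (CFC.sqrt A * B * CFC.sqrt A).trace := by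
    rw [h1, Matrix.trace_mul_comm]
  rw [h2]
  have : (CFC.sqrt A * B * CFC.sqrt A).PosSemidef := by
    have := hB.mul_mul_conjTranspose_same (CFC.sqrt A)
    rwa [hS.1] at this
  exact myTraceNonneg this

-- the feasible set is nonempty
lemma myFeasible (G : SimpleGraph V) [DecidableRel G.Adj] :
    ((Fintype.card V : ℝ)) ∈ {lam : ℝ | ∃ M : Matrix V V ℝ, M.PosSemidef ∧
      (∀ v, M v v = lam - 1) ∧ ∀ u v, G.Adj u v → M u v ≤ -1} := by
  set n : ℝ := (Fintype.card V : ℝ)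
  refine ⟨n • (1 : Matrix V V ℝ) - Matrix.of (fun _ _ => (1:ℝ)), ?_, ?_, ?_⟩
  · apply PosSemidef.of_dotProduct_mulVec_nonneg
    · unfold Matrix.IsHermitian
      ext i j
      simp [Matrix.conjTranspose_apply, Matrix.one_apply, eq_comm]
    · intro x
      have hcs := sq_sum_le_card_mul_sum_sq (s := (univ : Finset V)) (f := fun v => x v)
      have hJ : (Matrix.of (fun _ _ => (1:ℝ)) : Matrix V V ℝ) *ᵥ x = fun _ => ∑ i, x i := by
        ext v; simp [mulVec, dotProduct]
      have : dotProduct (star x) ((n • (1 : Matrix V V ℝ) - Matrix.of (fun _ _ => (1:ℝ))) *ᵥ x)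
          = n * (∑ v, x v ^ 2) - (∑ v, x v) ^ 2 := by
        rw [sub_mulVec, dotProduct_sub, smul_mulVec, one_mulVec, dotProduct_smul, hJ]
        simp only [star_trivial, smul_eq_mul, dotProduct]
        rw [← Finset.sum_mul]
        ring_nf
      rw [this]
      have hcard : (((univ : Finset V).card : ℕ) : ℝ) = n := by simp [n]
      rw [hcard] at hcs
      linarith
  · intro v; simp [Matrix.one_apply]
  · intro u v huv
    have : u ≠ v := huv.ne
    simp [Matrix.one_apply, this]

lemma myPSD (G : SimpleGraph V) [DecidableRel G.Adj] (τ : ℝ)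
    (hleast : ∀ (μ : ℝ) (x : V → ℝ), x ≠ 0 →
      (G.adjMatrix ℝ).mulVec x = μ • x → τ ≤ μ) :
    (G.adjMatrix ℝ - τ • 1).PosSemidef := by
  have hBH : (G.adjMatrix ℝ - τ • 1).IsHermitian := by
    apply Matrix.IsHermitian.sub
    · unfold Matrix.IsHermitian
      ext i j
      simp [Matrix.conjTranspose_apply, adj_comm]
    · unfold Matrix.IsHermitian
      ext i j
      simp [Matrix.conjTranspose_apply, Matrix.one_apply, eq_comm]
  apply hBH.posSemidef_iff_eigenvalues_nonneg.mpr
  intro i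
  rw [Pi.zero_apply]
  set ν := hBH.eigenvalues i
  have hvec := hBH.mulVec_eigenvectorBasis i
  have hne : (⇑(hBH.eigenvectorBasis i) : V → ℝ) ≠ 0 :=
    (not_congr (WithLp.ofLp_eq_zero 2)).mpr (hBH.eigenvectorBasis.orthonormal.ne_zero i)
  have hAv : (G.adjMatrix ℝ) *ᵥ ⇑(hBH.eigenvectorBasis i)
      = (ν + τ) • ⇑(hBH.eigenvectorBasis i) := by
    have : (G.adjMatrix ℝ - τ • 1) *ᵥ ⇑(hBH.eigenvectorBasis i)
        = (G.adjMatrix ℝ) *ᵥ ⇑(hBH.eigenvectorBasis i) - τ • ⇑(hBH.eigenvectorBasis i) := by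
      rw [sub_mulVec, smul_mulVec, one_mulVec]
    rw [this] at hvec
    have := congrArg (· + τ • ⇑(hBH.eigenvectorBasis i)) hvec
    simp only [sub_add_cancel] at this
    rw [this, add_smul]
  have := hleast (ν + τ) _ hne hAv
  linarith
end Aux

/-- The vector chromatic number, as the optimal value of the SDP:
minimize `λ` subject to `M ⪰ 0`, `M_{vv} = λ - 1` for all `v`, and `M_{uv} ≤ -1`
on edges. -/
noncomputable def chiVecSDP {V : Type} [Fintype V] (G : SimpleGraph V) : ℝ :=
  sInf {lam : ℝ | ∃ M : Matrix V V ℝ, M.PosSemidef ∧ (∀ v, M v v = lam - 1) ∧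
    ∀ u v, G.Adj u v → M u v ≤ -1}

/-- If `G` has `n` vertices, `e` edges and least adjacency eigenvalue `τ < 0`, then
`χ_vec(G) ≥ 1 - (2e/n)/τ`. -/
theorem stmt13 {V : Type} [Fintype V] [DecidableEq V]
    (G : SimpleGraph V) [DecidableRel G.Adj] (τ : ℝ) (hτ : τ < 0)
    (heig : ∃ x : V → ℝ, x ≠ 0 ∧ (G.adjMatrix ℝ).mulVec x = τ • x)
    (hleast : ∀ (μ : ℝ) (x : V → ℝ), x ≠ 0 →
      (G.adjMatrix ℝ).mulVec x = μ • x → τ ≤ μ) :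
    1 - (2 * (G.edgeFinset.card : ℝ) / (Fintype.card V : ℝ)) / τ ≤ chiVecSDP G := by
  obtain ⟨x₀, hx₀, -⟩ := heig
  have hNe : Nonempty V := by
    rcases isEmpty_or_nonempty V with h | h
    · exact absurd (Subsingleton.elim x₀ 0) hx₀
    · exact h
  set e : ℝ := (G.edgeFinset.card : ℝ) with he
  set n : ℝ := (Fintype.card V : ℝ) with hn'
  have hn : (0:ℝ) < n := by rw [hn']; exact_mod_cast Fintype.card_pos
  rw [chiVecSDP]
  apply le_csInf ⟨(Fintype.card V : ℝ), myFeasible G⟩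
  rintro lam ⟨M, hMpsd, hMdiag, hMedge⟩
  have hB := myPSD G τ hleast
  have h0 := myTraceMulNonneg hB hMpsd
  have htr : ((G.adjMatrix ℝ - τ • 1) * M).trace
      = (G.adjMatrix ℝ * M).trace - τ * M.trace := by
    rw [sub_mul, Matrix.smul_mul, one_mul, Matrix.trace_sub, Matrix.trace_smul, smul_eq_mul]
  have hMtr : M.trace = n * (lam - 1) := by
    calc M.trace = ∑ v : V, M v v := rfl
      _ = ∑ _v : V, (lam - 1) := by
          apply Finset.sum_congr rfl; intro v _; exact hMdiag v
      _ = n * (lam - 1) := by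
          rw [Finset.sum_const, nsmul_eq_mul, Finset.card_univ, hn']
  have hadj : (G.adjMatrix ℝ * M).trace ≤ -(2 * e) := by
    have hd : ∑ v : V, (G.degree v : ℝ) = 2 * e := by
      rw [← Nat.cast_sum, G.sum_degrees_eq_twice_card_edges]
      push_cast [he]
      ring
    calc (G.adjMatrix ℝ * M).trace = ∑ v : V, ∑ u : V, G.adjMatrix ℝ v u * M u v := by
          simp [Matrix.trace, Matrix.diag, Matrix.mul_apply]
      _ ≤ ∑ v : V, ∑ u : V, (if G.Adj v u then (-1:ℝ) else 0) := by
          apply Finset.sum_le_sum; intro v _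
          apply Finset.sum_le_sum; intro u _
          by_cases h : G.Adj v u
          · simpa [h] using hMedge u v h.symm
          · simp [h]
      _ = ∑ v : V, -(G.degree v : ℝ) := by
          apply Finset.sum_congr rfl; intro v _
          rw [← Finset.sum_filter, Finset.sum_const, ← neighborFinset_eq_filter]
          rw [SimpleGraph.degree]
          simp only [nsmul_eq_mul, mul_neg, mul_one]
      _ = -(2 * e) := by
          rw [show (∑ v : V, -(G.degree v : ℝ)) = -(∑ v : V, (G.degree v : ℝ)) from by simp, hd]
  have hkey : τ * (n * (lam - 1)) ≤ -(2 * e) := by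
    rw [htr, hMtr] at h0
    linarith
  have hτn : τ * n < 0 := mul_neg_of_neg_of_pos hτ hn
  have h2 : -(2 * e) / (τ * n) ≤ lam - 1 := by
    rw [div_le_iff_of_neg hτn]
    nlinarith [hkey]
  have hn0 : n ≠ 0 := ne_of_gt hn
  have hτ0 : τ ≠ 0 := ne_of_lt hτ
  have heq : 1 - (2 * e / n) / τ = 1 + -(2 * e) / (τ * n) := by
    field_simp
    ring
  rw [heq]
  linarith
end

section
/- If G is an edge-transitive graph with greatest adjacency eigenvalue λ and least adjacency eigenvalue τ, then χ_vec(G) = θ̄(G) = 1 − λ/τ. -/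
/-- The Lovász theta of the complement (strict vector chromatic number), as the
optimal value of the SDP: minimize `λ` subject to `M ⪰ 0`, `M_{vv} = λ - 1` for
all `v`, and `M_{uv} = -1` on edges. -/
noncomputable def thetaBarSDP {V : Type} [Fintype V] (G : SimpleGraph V) : ℝ :=
  sInf {lam : ℝ | ∃ M : Matrix V V ℝ, M.PosSemidef ∧ (∀ v, M v v = lam - 1) ∧
    ∀ u v, G.Adj u v → M u v = -1}

namespace Stmt15Aux


open Matrix SimpleGraph Finset

set_option linter.unusedSectionVars false

variable {V : Type} [Fintype V] [DecidableEq V] (G : SimpleGraph V) [DecidableRel G.Adj]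

lemma psd_diag_nonneg {M : Matrix V V ℝ} (hM : M.PosSemidef) (v : V) : 0 ≤ M v v := by
  simpa using hM.dotProduct_mulVec_nonneg (Pi.single v 1)

lemma psd_smul {M : Matrix V V ℝ} (hM : M.PosSemidef) {a : ℝ} (ha : 0 ≤ a) :
    (a • M).PosSemidef := by
  refine .of_dotProduct_mulVec_nonneg ?_ fun x => ?_
  · have hMt : Mᵀ = M := by
      rw [← conjTranspose_eq_transpose_of_trivial]; exact hM.1
    rw [Matrix.IsHermitian, conjTranspose_eq_transpose_of_trivial, Matrix.transpose_smul, hMt]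
  · rw [Matrix.smul_mulVec, dotProduct_smul, smul_eq_mul]
    exact mul_nonneg ha (by simpa using hM.dotProduct_mulVec_nonneg x)

open scoped MatrixOrder in
lemma trace_mul_nonneg {M X : Matrix V V ℝ} (hM : M.PosSemidef) (hX : X.PosSemidef) :
    0 ≤ (M * X).trace := by
  obtain ⟨B, hBsa, -, hBX⟩ := CFC.exists_sqrt_of_isSelfAdjoint_of_quasispectrumRestricts
    hX.isHermitian.isSelfAdjoint (QuasispectrumRestricts.nnreal_of_nonneg hX.nonneg)
  obtain rfl : X = Bᴴ * B := by rw [← hBX, ← star_eq_conjTranspose, hBsa.star_eq]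
  have h1 : (M * (Bᴴ * B)).trace = (B * M * Bᴴ).trace := by
    rw [← Matrix.mul_assoc, Matrix.trace_mul_comm, ← Matrix.mul_assoc]
  rw [h1, Matrix.trace]
  exact Finset.sum_nonneg fun v _ => psd_diag_nonneg (hM.mul_mul_conjTranspose_same B) v

lemma psd_vecMulVec (x : V → ℝ) : (vecMulVec x x).PosSemidef := by
  refine .of_dotProduct_mulVec_nonneg ?_ ?_
  · rw [Matrix.IsHermitian, conjTranspose_eq_transpose_of_trivial]
    ext i j; simp [vecMulVec_apply, transpose_apply, mul_comm]
  · intro y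
    have h : (vecMulVec x x) *ᵥ y = (x ⬝ᵥ y) • x := by
      ext i
      simp [mulVec, vecMulVec_apply, dotProduct, Finset.mul_sum, mul_assoc, mul_comm,
        mul_left_comm]
    rw [h]
    simp only [star_trivial, dotProduct_smul, smul_eq_mul, dotProduct_comm y x]
    exact mul_self_nonneg _

lemma hermA : (G.adjMatrix ℝ).IsHermitian := by
  rw [Matrix.IsHermitian, conjTranspose_eq_transpose_of_trivial, transpose_adjMatrix]

lemma psd_shift {τ : ℝ}
    (hleast : ∀ (μ : ℝ) (x : V → ℝ), x ≠ 0 → (G.adjMatrix ℝ).mulVec x = μ • x → τ ≤ μ) :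
    (G.adjMatrix ℝ - τ • 1).PosSemidef := by
  have h1 : ((τ:ℝ) • (1 : Matrix V V ℝ)).IsHermitian := by
    rw [Matrix.IsHermitian, conjTranspose_eq_transpose_of_trivial, Matrix.transpose_smul,
      Matrix.transpose_one]
  have hB : (G.adjMatrix ℝ - τ • 1).IsHermitian := (hermA G).sub h1
  refine hB.posSemidef_iff_eigenvalues_nonneg.mpr (Pi.le_def.mpr fun j => (?_ : 0 ≤ hB.eigenvalues j))
  have hv := hB.mulVec_eigenvectorBasis j
  set v : V → ℝ := ⇑(hB.eigenvectorBasis j) with hvdef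
  have hv0 : v ≠ 0 := by
    intro h
    exact hB.eigenvectorBasis.toBasis.ne_zero j
      ((WithLp.equiv 2 _).injective (by simpa [hvdef] using h))
  have hsub : (G.adjMatrix ℝ - τ • 1) *ᵥ v = (G.adjMatrix ℝ) *ᵥ v - τ • v := by
    rw [Matrix.sub_mulVec, Matrix.smul_mulVec, Matrix.one_mulVec]
  rw [hsub] at hv
  have hAv : (G.adjMatrix ℝ) *ᵥ v = (hB.eigenvalues j + τ) • v := by
    rw [add_smul, ← hv]; abel
  have := hleast _ v hv0 hAv
  linarith

lemma rayleigh {τ : ℝ}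
    (hleast : ∀ (μ : ℝ) (x : V → ℝ), x ≠ 0 → (G.adjMatrix ℝ).mulVec x = μ • x → τ ≤ μ)
    (x : V → ℝ) : τ * (x ⬝ᵥ x) ≤ x ⬝ᵥ ((G.adjMatrix ℝ) *ᵥ x) := by
  have h := (psd_shift G hleast).dotProduct_mulVec_nonneg x
  simp only [star_trivial, Matrix.sub_mulVec, Matrix.smul_mulVec, Matrix.one_mulVec,
    dotProduct_sub, dotProduct_smul, smul_eq_mul] at h
  linarith

/-- A permutation of the vertices that is an automorphism. -/
def IsAut (f : Equiv.Perm V) : Prop := ∀ u v, G.Adj (f u) (f v) ↔ G.Adj u v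

instance : DecidablePred (IsAut G) := fun f =>
  inferInstanceAs (Decidable (∀ u v, G.Adj (f u) (f v) ↔ G.Adj u v))

lemma isAut_one : IsAut G 1 := fun _ _ => Iff.rfl

lemma isAut_mul_iff {h : Equiv.Perm V} (hh : IsAut G h) (g : Equiv.Perm V) :
    IsAut G (h * g) ↔ IsAut G g := by
  constructor <;> intro hg u v
  · rw [← hg u v, Equiv.Perm.mul_apply, Equiv.Perm.mul_apply, hh]
  · rw [Equiv.Perm.mul_apply, Equiv.Perm.mul_apply, hh, hg]

lemma isAut_iso (f : G ≃g G) : IsAut G f.toEquiv := fun _ _ => f.map_adj_iff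

lemma degree_perm {f : Equiv.Perm V} (hf : IsAut G f) (v : V) :
    G.degree (f v) = G.degree v := by
  rw [← card_neighborFinset_eq_degree, ← card_neighborFinset_eq_degree]
  exact (Finset.card_equiv f (fun u => by
    simp only [mem_neighborFinset]
    exact (hf v u).symm)).symm

/-- The average of `x xᵀ` over the automorphism group (up to scaling). -/
noncomputable def M0 (x : V → ℝ) : Matrix V V ℝ :=
  ∑ f : Equiv.Perm V,
    if IsAut G f then vecMulVec (fun v => x (f.symm v)) (fun v => x (f.symm v)) else 0

lemma M0_apply (x : V → ℝ) (u v : V) :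
    M0 G x u v = ∑ f : Equiv.Perm V, if IsAut G f then x (f.symm u) * x (f.symm v) else 0 := by
  rw [M0, Matrix.sum_apply]
  refine Finset.sum_congr rfl fun f _ => ?_
  by_cases h : IsAut G f <;> simp [h, vecMulVec_apply]

lemma M0_symm_entry (x : V → ℝ) (u v : V) : M0 G x u v = M0 G x v u := by
  rw [M0_apply, M0_apply]
  exact Finset.sum_congr rfl fun f _ => by rw [mul_comm]

lemma M0_psd (x : V → ℝ) : (M0 G x).PosSemidef := by
  rw [M0]
  refine Finset.sum_induction _ _ (fun a b ha hb => ha.add hb) Matrix.PosSemidef.zero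
    fun f _ => ?_
  by_cases h : IsAut G f
  · simpa [h] using psd_vecMulVec (fun v => x (f.symm v))
  · simpa [h] using Matrix.PosSemidef.zero

lemma M0_invariant (x : V → ℝ) {h : Equiv.Perm V} (hh : IsAut G h) (u v : V) :
    M0 G x (h u) (h v) = M0 G x u v := by
  rw [M0_apply, M0_apply]
  refine (Fintype.sum_bijective (fun g => h * g) (Group.mulLeft_bijective h) _ _
    fun g => ?_).symm
  have hsymm : ∀ w : V, (h * g).symm (h w) = g.symm w := by
    intro w
    simp [Equiv.Perm.mul_def, Equiv.symm_trans_apply]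
  by_cases hg : IsAut G g
  · simp [hg, (isAut_mul_iff G hh g).mpr hg, hsymm]
  · rw [if_neg hg, if_neg fun hc => hg ((isAut_mul_iff G hh g).mp hc)]

lemma mulVec_perm {τ : ℝ} (x : V → ℝ) (hx : (G.adjMatrix ℝ) *ᵥ x = τ • x)
    {f : Equiv.Perm V} (hf : IsAut G f) :
    (G.adjMatrix ℝ) *ᵥ (fun v => x (f.symm v)) = τ • (fun v => x (f.symm v)) := by
  funext v
  rw [adjMatrix_mulVec_apply]
  have h1 : ∑ u ∈ G.neighborFinset v, x (f.symm u)
      = ∑ w ∈ G.neighborFinset (f.symm v), x w := by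
    refine Finset.sum_equiv f.symm (fun u => ?_) (fun u _ => rfl)
    simp only [mem_neighborFinset]
    rw [← hf (f.symm v) (f.symm u)]
    simp
  rw [h1, ← adjMatrix_mulVec_apply, hx]
  simp

lemma mul_vecMulVec (A : Matrix V V ℝ) (y z : V → ℝ) :
    A * vecMulVec y z = vecMulVec (A *ᵥ y) z := by
  ext i j
  simp [Matrix.mul_apply, vecMulVec_apply, mulVec, dotProduct, Finset.sum_mul, mul_assoc]

lemma adj_mul_M0 {τ : ℝ} (x : V → ℝ) (hx : (G.adjMatrix ℝ) *ᵥ x = τ • x) :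
    (G.adjMatrix ℝ) * M0 G x = τ • M0 G x := by
  rw [M0, Finset.mul_sum, Finset.smul_sum]
  refine Finset.sum_congr rfl fun f _ => ?_
  by_cases hf : IsAut G f
  · rw [if_pos hf, mul_vecMulVec, mulVec_perm G x hx hf]
    ext i j
    simp [vecMulVec_apply, mul_assoc]
  · simp [hf]

lemma M0_trace_pos (x : V → ℝ) (hx0 : x ≠ 0) : 0 < ∑ v, M0 G x v v := by
  have h1 : ∀ v, x v ^ 2 ≤ M0 G x v v := by
    intro v
    rw [M0_apply]
    have := Finset.single_le_sum (f := fun f : Equiv.Perm V =>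
        if IsAut G f then x (f.symm v) * x (f.symm v) else 0)
      (fun f _ => by by_cases h : IsAut G f <;> simp [h, mul_self_nonneg]) (Finset.mem_univ 1)
    simpa [IsAut, sq, Equiv.Perm.one_symm] using this
  obtain ⟨v, hv⟩ := Function.ne_iff.mp hx0
  calc (0:ℝ) < ∑ w, x w ^ 2 := by
        refine Finset.sum_pos' (fun w _ => sq_nonneg _) ⟨v, Finset.mem_univ v, ?_⟩
        have : x v ≠ 0 := by simpa using hv
        positivity
    _ ≤ ∑ v, M0 G x v v := Finset.sum_le_sum fun w _ => h1 w


variable {V : Type} [Fintype V] [DecidableEq V] [Nonempty V]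

theorem edge_case (G : SimpleGraph V) [DecidableRel G.Adj] (lam τ : ℝ)
    (hET : ∀ ⦃u v x y : V⦄, G.Adj u v → G.Adj x y →
      ∃ f : G ≃g G, (f u = x ∧ f v = y) ∨ (f u = y ∧ f v = x))
    (hgeig : ∃ x : V → ℝ, x ≠ 0 ∧ (G.adjMatrix ℝ).mulVec x = lam • x)
    (hgreatest : ∀ (μ : ℝ) (x : V → ℝ), x ≠ 0 →
      (G.adjMatrix ℝ).mulVec x = μ • x → μ ≤ lam)
    (hleig : ∃ x : V → ℝ, x ≠ 0 ∧ (G.adjMatrix ℝ).mulVec x = τ • x)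
    (hleast : ∀ (μ : ℝ) (x : V → ℝ), x ≠ 0 →
      (G.adjMatrix ℝ).mulVec x = μ • x → τ ≤ μ)
    {a b : V} (hab : G.Adj a b) :
    ((1 - lam/τ) ∈ {l : ℝ | ∃ M : Matrix V V ℝ, M.PosSemidef ∧ (∀ v, M v v = l - 1) ∧
        ∀ u v, G.Adj u v → M u v = -1}) ∧
      ∀ s ∈ {l : ℝ | ∃ M : Matrix V V ℝ, M.PosSemidef ∧ (∀ v, M v v = l - 1) ∧
        ∀ u v, G.Adj u v → M u v ≤ -1}, 1 - lam/τ ≤ s := by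
  classical
  have hne : a ≠ b := hab.ne
  -- τ is at most -1
  have htau : τ ≤ -1 := by
    set xv : V → ℝ := (Pi.single a 1 : V → ℝ) - (Pi.single b 1 : V → ℝ) with hxv
    have hray := rayleigh G hleast xv
    have hd1 : xv ⬝ᵥ xv = 2 := by
      simp [hxv, sub_dotProduct, dotProduct_sub, dotProduct_single, single_dotProduct,
        Pi.single_apply, hne, hne.symm]
      norm_num
    have hd2 : xv ⬝ᵥ ((G.adjMatrix ℝ) *ᵥ xv) = -2 := by
      simp [hxv, Matrix.mulVec_sub, Matrix.mulVec_single, sub_dotProduct, dotProduct_sub,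
        single_dotProduct, adjMatrix_apply, hab, hab.symm, hne, G.irrefl]
      norm_num
    rw [hd1, hd2] at hray
    linarith
  have hτneg : τ < 0 := lt_of_le_of_lt htau (by norm_num)
  have hτne : τ ≠ 0 := ne_of_lt hτneg
  by_cases horb : ∃ f : G ≃g G, f a = b
  · -- "regular" case: all endpoints of edges are in one orbit
    obtain ⟨g0, hg0⟩ := horb
    have hdegk : ∀ u v, G.Adj u v → G.degree u = G.degree a := by
      intro u v huv
      obtain ⟨f, hf⟩ := hET hab huv
      rcases hf with ⟨h1, h2⟩ | ⟨h1, h2⟩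
      · rw [← h1]
        exact degree_perm G (isAut_iso G f) a
      · rw [← h2]
        have hfb : f b = (RelIso.trans g0 f) a := by simp [hg0]
        rw [hfb]
        exact degree_perm G (isAut_iso G (RelIso.trans g0 f)) a
    set k : ℕ := G.degree a with hkdef
    have hk1 : 0 < k := (G.degree_pos_iff_exists_adj a).mpr ⟨b, hab⟩
    have hdeg' : ∀ v, 0 < G.degree v → G.degree v = k := by
      intro v hv
      obtain ⟨w, hw⟩ := (G.degree_pos_iff_exists_adj v).mp hv
      exact hdegk v w hw
    have hnbrdeg : ∀ v u, u ∈ G.neighborFinset v → G.degree u = k := by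
      intro v u hu
      exact hdegk u v ((G.mem_neighborFinset v u).mp hu).symm
    -- lam = k
    have hlamk : lam = (k : ℝ) := by
      have hle1 : (k:ℝ) ≤ lam := by
        set y0 : V → ℝ := fun v => if 0 < G.degree v then 1 else 0 with hy0
        have heig : (G.adjMatrix ℝ) *ᵥ y0 = (k:ℝ) • y0 := by
          funext v
          rw [adjMatrix_mulVec_apply]
          have hs : ∀ u ∈ G.neighborFinset v, y0 u = 1 := by
            intro u hu
            simp only [hy0]
            rw [if_pos (by rw [hnbrdeg v u hu]; exact hk1)]
          rw [Finset.sum_congr rfl hs, Finset.sum_const, card_neighborFinset_eq_degree]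
          by_cases hv : 0 < G.degree v
          · simp [hy0, hv, hdeg' v hv, hk1]
          · have : G.degree v = 0 := Nat.eq_zero_of_not_pos hv
            simp [hy0, hv, this]
        refine hgreatest _ y0 ?_ heig
        intro hcon
        have h := congrFun hcon a
        simp only [hy0] at h
        rw [if_pos (hkdef ▸ hk1)] at h
        exact one_ne_zero h
      have hle2 : lam ≤ (k:ℝ) := by
        obtain ⟨y, hy0, hy⟩ := hgeig
        obtain ⟨v, -, hvmax⟩ := Finset.exists_max_image Finset.univ (fun w => |y w|)
          ⟨a, Finset.mem_univ a⟩
        have hyvpos : 0 < |y v| := by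
          obtain ⟨w, hw⟩ := Function.ne_iff.mp hy0
          exact lt_of_lt_of_le (abs_pos.mpr hw) (hvmax w (Finset.mem_univ w))
        have h1 : lam * y v = ∑ u ∈ G.neighborFinset v, y u := by
          have := congrFun hy v
          rw [adjMatrix_mulVec_apply] at this
          simpa [eq_comm] using this
        have h2 : |lam| * |y v| ≤ (k:ℝ) * |y v| := by
          rw [← abs_mul, h1]
          calc |∑ u ∈ G.neighborFinset v, y u| ≤ ∑ u ∈ G.neighborFinset v, |y u| :=
                Finset.abs_sum_le_sum_abs _ _
            _ ≤ ∑ _u ∈ G.neighborFinset v, |y v| :=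
                Finset.sum_le_sum fun u _ => hvmax u (Finset.mem_univ u)
            _ = (G.degree v : ℝ) * |y v| := by
                rw [Finset.sum_const, card_neighborFinset_eq_degree, nsmul_eq_mul]
            _ ≤ (k:ℝ) * |y v| := by
                refine mul_le_mul_of_nonneg_right ?_ (abs_nonneg _)
                by_cases hv : 0 < G.degree v
                · rw [hdeg' v hv]
                · have h0 : G.degree v = 0 := Nat.eq_zero_of_not_pos hv
                  rw [h0]
                  exact_mod_cast Nat.zero_le k
        have := le_of_mul_le_mul_right h2 hyvpos
        exact (le_abs_self lam).trans this
      linarith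
    have hlampos : (0:ℝ) < lam := by
      rw [hlamk]
      exact_mod_cast hk1
    constructor
    · -- feasibility using M0
      obtain ⟨x, hx0, hx⟩ := hleig
      set c : ℝ := M0 G x a b with hcdef
      have hconst : ∀ u v, G.Adj u v → M0 G x u v = c := by
        intro u v huv
        obtain ⟨f, hf⟩ := hET hab huv
        rcases hf with ⟨h1, h2⟩ | ⟨h1, h2⟩
        · rw [hcdef, ← h1, ← h2]
          exact M0_invariant G x (isAut_iso G f) a b
        · have h3 := M0_invariant G x (isAut_iso G f) b a
          simp only [RelIso.coe_fn_toEquiv] at h3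
          rw [hcdef, ← h1, ← h2, h3]
          exact M0_symm_entry G x b a
      have hdiagM0 : ∀ v, τ * M0 G x v v = (G.degree v : ℝ) * c := by
        intro v
        have h1 := congrFun (congrFun (adj_mul_M0 G x hx) v) v
        rw [adjMatrix_mul_apply] at h1
        have h2 : ∀ u ∈ G.neighborFinset v, M0 G x u v = c := by
          intro u hu
          exact hconst u v (((G.mem_neighborFinset v u).mp hu).symm)
        rw [Finset.sum_congr rfl h2, Finset.sum_const, card_neighborFinset_eq_degree] at h1
        simp only [Matrix.smul_apply, smul_eq_mul, nsmul_eq_mul] at h1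
        linarith [h1]
      have hM0diag : ∀ v, M0 G x v v = (G.degree v : ℝ) * c / τ := by
        intro v
        rw [eq_div_iff hτne]
        linarith [hdiagM0 v]
      have hcneg : c < 0 := by
        rcases lt_trichotomy c 0 with h | h | h
        · exact h
        · exfalso
          have htr := M0_trace_pos G x hx0
          have : ∑ v, M0 G x v v = 0 := by
            refine Finset.sum_eq_zero fun v _ => ?_
            rw [hM0diag v, h, mul_zero, zero_div]
          rw [this] at htr
          exact lt_irrefl 0 htr
        · exfalso
          have h1 := psd_diag_nonneg (M0_psd G x) a
          have h2 := hdiagM0 a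
          rw [← hkdef] at h2
          have hk' : (0:ℝ) < (k:ℝ) := by exact_mod_cast hk1
          nlinarith
      set N : Matrix V V ℝ := (-c)⁻¹ • M0 G x +
        Matrix.diagonal (fun v => if 0 < G.degree v then 0 else -lam/τ) with hNdef
      have hdnn : ∀ v, 0 ≤ (fun v => if 0 < G.degree v then (0:ℝ) else -lam/τ) v := by
        intro v
        by_cases hv : 0 < G.degree v
        · simp [hv]
        · simp only [hv, if_false]
          rw [neg_div]
          have : lam / τ ≤ 0 := div_nonpos_of_nonneg_of_nonpos hlampos.le hτneg.le
          linarith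
      have hNpsd : N.PosSemidef := by
        refine (psd_smul (M0_psd G x) (inv_nonneg.mpr (by linarith))).add ?_
        exact Matrix.posSemidef_diagonal_iff.mpr hdnn
      refine ⟨N, hNpsd, fun v => ?_, fun u v huv => ?_⟩
      · rw [hNdef]
        simp only [Matrix.add_apply, Matrix.smul_apply, Matrix.diagonal_apply_eq, smul_eq_mul]
        rw [hM0diag v]
        by_cases hv : 0 < G.degree v
        · rw [if_pos hv, hdeg' v hv, hlamk]
          have hcne : c ≠ 0 := ne_of_lt hcneg
          field_simp
          ring
        · have hdv : G.degree v = 0 := Nat.eq_zero_of_not_pos hv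
          rw [if_neg hv, hdv]
          simp
          ring
      · rw [hNdef]
        simp only [Matrix.add_apply, Matrix.smul_apply, smul_eq_mul,
          Matrix.diagonal_apply_ne _ huv.ne]
        rw [hconst u v huv]
        have hcne : c ≠ 0 := ne_of_lt hcneg
        field_simp
        norm_num
    · -- lower bound
      rintro s ⟨M, hM, hdiag, hedge⟩
      set d : V → ℝ := fun v => if 0 < G.degree v then 1 else 0 with hddef
      have hXpsd : ((G.adjMatrix ℝ) - τ • Matrix.diagonal d).PosSemidef := by
        refine .of_dotProduct_mulVec_nonneg ?_ ?_
        · rw [Matrix.IsHermitian, conjTranspose_eq_transpose_of_trivial, Matrix.transpose_sub,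
            transpose_adjMatrix, Matrix.transpose_smul, Matrix.diagonal_transpose]
        · intro y
          simp only [star_trivial, Matrix.sub_mulVec, Matrix.smul_mulVec,
            dotProduct_sub, dotProduct_smul, smul_eq_mul]
          set y' : V → ℝ := fun v => d v * y v with hy'def
          have hAyy : y ⬝ᵥ ((G.adjMatrix ℝ) *ᵥ y) = y' ⬝ᵥ ((G.adjMatrix ℝ) *ᵥ y') := by
            unfold dotProduct
            refine Finset.sum_congr rfl fun v _ => ?_
            rw [adjMatrix_mulVec_apply, adjMatrix_mulVec_apply]
            by_cases hv : 0 < G.degree v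
            · have h1 : y' v = y v := by simp [hy'def, hddef, hv]
              have h2 : ∀ u ∈ G.neighborFinset v, y' u = y u := by
                intro u hu
                have : 0 < G.degree u := by rw [hnbrdeg v u hu]; exact hk1
                simp [hy'def, hddef, this]
              rw [h1, Finset.sum_congr rfl h2]
            · have hdv : G.degree v = 0 := Nat.eq_zero_of_not_pos hv
              have hemp : G.neighborFinset v = ∅ := by
                apply Finset.card_eq_zero.mp
                rw [card_neighborFinset_eq_degree, hdv]
              simp [hemp]
          have hdd : y ⬝ᵥ ((Matrix.diagonal d) *ᵥ y) = y' ⬝ᵥ y' := by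
            unfold dotProduct
            refine Finset.sum_congr rfl fun v _ => ?_
            rw [Matrix.mulVec_diagonal]
            by_cases hv : 0 < G.degree v <;> simp [hy'def, hddef, hv] <;> ring
          rw [hAyy, hdd]
          have := rayleigh G hleast y'
          linarith
      have h0 := trace_mul_nonneg hM hXpsd
      have hexp : (M * ((G.adjMatrix ℝ) - τ • Matrix.diagonal d)).trace
          = (M * (G.adjMatrix ℝ)).trace - τ * (M * Matrix.diagonal d).trace := by
        rw [Matrix.mul_sub, Matrix.mul_smul, Matrix.trace_sub, Matrix.trace_smul, smul_eq_mul]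
      set Nd : ℝ := ∑ v, d v with hNddef
      have hNdpos : 0 < Nd := by
        refine Finset.sum_pos' (fun v _ => by by_cases hv : 0 < G.degree v <;>
          simp [hddef, hv]) ⟨a, Finset.mem_univ a, ?_⟩
        simp [hddef, hk1.trans_le hkdef.le]
      have htr1 : (M * (G.adjMatrix ℝ)).trace ≤ -((k:ℝ) * Nd) := by
        rw [Matrix.trace]
        have hstep : ∀ v, (M * (G.adjMatrix ℝ)).diag v ≤ -((k:ℝ) * d v) := by
          intro v
          rw [Matrix.diag_apply, mul_adjMatrix_apply]
          calc ∑ u ∈ G.neighborFinset v, M v u ≤ ∑ _u ∈ G.neighborFinset v, (-1:ℝ) :=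
                Finset.sum_le_sum fun u hu => hedge v u ((G.mem_neighborFinset v u).mp hu)
            _ = -((G.degree v : ℝ)) := by
                rw [Finset.sum_const, card_neighborFinset_eq_degree, nsmul_eq_mul]; ring
            _ = -((k:ℝ) * d v) := by
                by_cases hv : 0 < G.degree v
                · rw [hdeg' v hv]; simp [hddef, hv]
                · have hdv : G.degree v = 0 := Nat.eq_zero_of_not_pos hv
                  rw [hdv]; simp [hddef, hv]
        calc ∑ v, (M * (G.adjMatrix ℝ)).diag v ≤ ∑ v, -((k:ℝ) * d v) :=
              Finset.sum_le_sum fun v _ => hstep v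
          _ = -((k:ℝ) * Nd) := by simp [hNddef, Finset.mul_sum]
      have htr2 : (M * Matrix.diagonal d).trace = (s - 1) * Nd := by
        rw [Matrix.trace, hNddef, Finset.mul_sum]
        refine Finset.sum_congr rfl fun v _ => ?_
        rw [Matrix.diag_apply, Matrix.mul_diagonal, hdiag v]
      rw [hexp, htr2] at h0
      have hE : 0 ≤ -((k:ℝ)) - τ * (s - 1) := by
        by_contra hcon
        push_neg at hcon
        nlinarith
      rw [hlamk]
      have h2 : (-(k:ℝ))/τ ≤ s - 1 := by
        rw [div_le_iff_of_neg hτneg]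
        nlinarith
      rw [neg_div] at h2
      linarith
  · -- bipartite case
    have hQkey : ∀ u v, G.Adj u v →
        ((∃ f : G ≃g G, f a = u) ∧ ¬(∃ f : G ≃g G, f a = v)) ∨
        ((∃ f : G ≃g G, f a = v) ∧ ¬(∃ f : G ≃g G, f a = u)) := by
      intro u v huv
      obtain ⟨f, hf⟩ := hET hab huv
      have key : ¬ (∃ h : G ≃g G, h a = f b) := by
        rintro ⟨g, hg⟩
        refine horb ⟨RelIso.trans g f.symm, ?_⟩
        simp [hg]
      rcases hf with ⟨h1, h2⟩ | ⟨h1, h2⟩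
      · exact Or.inl ⟨⟨f, h1⟩, h2 ▸ key⟩
      · exact Or.inr ⟨⟨f, h1⟩, h2 ▸ key⟩
    set z : V → ℝ := fun v => if ∃ f : G ≃g G, f a = v then 1 else -1 with hzdef
    have hzsq : ∀ v, z v * z v = 1 := by
      intro v
      by_cases h : ∃ f : G ≃g G, f a = v <;> simp [hzdef, h]
    have hzedge : ∀ u v, G.Adj u v → z u * z v = -1 := by
      intro u v huv
      rcases hQkey u v huv with ⟨h1, h2⟩ | ⟨h1, h2⟩ <;> simp [hzdef, h1, h2]
    have hzflip : ∀ u v, G.Adj u v → z u = -z v := by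
      intro u v huv
      have h1 : z u = (z u * z v) * z v := by rw [mul_assoc, hzsq v, mul_one]
      rw [h1, hzedge u v huv]
      ring
    have hflipeig : ∀ (μ : ℝ) (x : V → ℝ), (G.adjMatrix ℝ) *ᵥ x = μ • x →
        (G.adjMatrix ℝ) *ᵥ (fun v => z v * x v) = (-μ) • (fun v => z v * x v) := by
      intro μ x hx
      funext v
      rw [adjMatrix_mulVec_apply]
      have h1 : ∀ u ∈ G.neighborFinset v, z u * x u = -z v * x u := by
        intro u hu
        rw [hzflip u v (((G.mem_neighborFinset v u).mp hu).symm)]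
      rw [Finset.sum_congr rfl h1]
      have h2 : ∑ u ∈ G.neighborFinset v, -z v * x u
          = -z v * ∑ u ∈ G.neighborFinset v, x u := by
        rw [Finset.mul_sum]
      rw [h2, ← adjMatrix_mulVec_apply, hx]
      simp only [Pi.smul_apply, smul_eq_mul]
      ring
    have hflipne : ∀ x : V → ℝ, x ≠ 0 → (fun v => z v * x v) ≠ 0 := by
      intro x hx0 hcon
      obtain ⟨v, hv⟩ := Function.ne_iff.mp hx0
      have := congrFun hcon v
      simp only [Pi.zero_apply] at this
      rcases mul_eq_zero.mp this with h | h
      · have := hzsq v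
        rw [h] at this
        norm_num at this
      · exact hv (by simpa using h)
    have hlamtau : lam = -τ := by
      obtain ⟨x, hx0, hx⟩ := hleig
      have hle1 : -τ ≤ lam := hgreatest _ _ (hflipne x hx0) (hflipeig τ x hx)
      obtain ⟨y, hy0, hy⟩ := hgeig
      have hle2 : τ ≤ -lam := hleast _ _ (hflipne y hy0) (hflipeig lam y hy)
      linarith
    have hr : 1 - lam/τ = 2 := by
      rw [hlamtau, neg_div, div_self hτne]
      norm_num
    rw [hr]
    constructor
    · refine ⟨vecMulVec z z, psd_vecMulVec z, fun v => ?_, fun u v huv => ?_⟩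
      · rw [vecMulVec_apply, hzsq v]
        norm_num
      · rw [vecMulVec_apply, hzedge u v huv]
    · rintro s ⟨M, hM, hdiag, hedge⟩
      have hq := hM.dotProduct_mulVec_nonneg ((Pi.single a 1 : V → ℝ) + (Pi.single b 1 : V → ℝ))
      simp only [star_trivial, Matrix.mulVec_add, Matrix.mulVec_single, add_dotProduct,
        single_dotProduct, dotProduct_add, Pi.add_apply, mul_one, one_mul,
        MulOpposite.op_one, one_smul, Matrix.col_apply] at hq
      have e1 := hedge a b hab
      have e2 := hedge b a hab.symm
      have d1 := hdiag a
      have d2 := hdiag b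
      linarith

end Stmt15Aux

/-- If `G` is edge transitive with greatest adjacency eigenvalue `lam` and least
adjacency eigenvalue `τ`, then `χ_vec(G) = θ̄(G) = 1 - lam/τ`. -/
theorem stmt15 {V : Type} [Fintype V] [DecidableEq V] [Nonempty V]
    (G : SimpleGraph V) [DecidableRel G.Adj] (lam τ : ℝ)
    (hET : ∀ ⦃u v x y : V⦄, G.Adj u v → G.Adj x y →
      ∃ f : G ≃g G, (f u = x ∧ f v = y) ∨ (f u = y ∧ f v = x))
    (hgeig : ∃ x : V → ℝ, x ≠ 0 ∧ (G.adjMatrix ℝ).mulVec x = lam • x)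
    (hgreatest : ∀ (μ : ℝ) (x : V → ℝ), x ≠ 0 →
      (G.adjMatrix ℝ).mulVec x = μ • x → μ ≤ lam)
    (hleig : ∃ x : V → ℝ, x ≠ 0 ∧ (G.adjMatrix ℝ).mulVec x = τ • x)
    (hleast : ∀ (μ : ℝ) (x : V → ℝ), x ≠ 0 →
      (G.adjMatrix ℝ).mulVec x = μ • x → τ ≤ μ) :
    chiVecSDP G = 1 - lam / τ ∧ thetaBarSDP G = 1 - lam / τ := by
  classical
  have key : ((1 - lam/τ) ∈ {l : ℝ | ∃ M : Matrix V V ℝ, M.PosSemidef ∧ (∀ v, M v v = l - 1) ∧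
        ∀ u v, G.Adj u v → M u v = -1}) ∧
      ∀ s ∈ {l : ℝ | ∃ M : Matrix V V ℝ, M.PosSemidef ∧ (∀ v, M v v = l - 1) ∧
        ∀ u v, G.Adj u v → M u v ≤ -1}, 1 - lam/τ ≤ s := by
    by_cases hE : ∃ a b, G.Adj a b
    · obtain ⟨a, b, hab⟩ := hE
      exact Stmt15Aux.edge_case G lam τ hET hgeig hgreatest hleig hleast hab
    · push_neg at hE
      have hA0 : G.adjMatrix ℝ = 0 := by
        ext u v
        simp [SimpleGraph.adjMatrix_apply, hE u v]
      have hlam : lam = 0 := by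
        obtain ⟨x, hx0, hx⟩ := hgeig
        rw [hA0] at hx
        simp only [Matrix.zero_mulVec] at hx
        rcases smul_eq_zero.mp hx.symm with h | h
        · exact h
        · exact absurd h hx0
      have htau : τ = 0 := by
        obtain ⟨x, hx0, hx⟩ := hleig
        rw [hA0] at hx
        simp only [Matrix.zero_mulVec] at hx
        rcases smul_eq_zero.mp hx.symm with h | h
        · exact h
        · exact absurd h hx0
      have hr : 1 - lam/τ = 1 := by rw [hlam, htau]; simp
      rw [hr]
      constructor
      · exact ⟨0, Matrix.PosSemidef.zero, fun v => by simp, fun u v huv => absurd huv (hE u v)⟩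
      · rintro s ⟨M, hM, hdiag, -⟩
        have := Stmt15Aux.psd_diag_nonneg hM (Classical.arbitrary V)
        rw [hdiag] at this
        linarith
  obtain ⟨hmem, hlb⟩ := key
  have hsub : {l : ℝ | ∃ M : Matrix V V ℝ, M.PosSemidef ∧ (∀ v, M v v = l - 1) ∧
        ∀ u v, G.Adj u v → M u v = -1} ⊆
      {l : ℝ | ∃ M : Matrix V V ℝ, M.PosSemidef ∧ (∀ v, M v v = l - 1) ∧
        ∀ u v, G.Adj u v → M u v ≤ -1} := by
    rintro s ⟨M, h1, h2, h3⟩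
    exact ⟨M, h1, h2, fun u v huv => le_of_eq (h3 u v huv)⟩
  constructor
  · rw [chiVecSDP]
    exact le_antisymm (csInf_le ⟨1 - lam/τ, fun s hs => hlb s hs⟩ (hsub hmem))
      (le_csInf ⟨_, hsub hmem⟩ hlb)
  · rw [thetaBarSDP]
    exact le_antisymm (csInf_le ⟨1 - lam/τ, fun s hs => hlb s (hsub hs)⟩ hmem)
      (le_csInf ⟨_, hmem⟩ fun s hs => hlb s (hsub hs))
end
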